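/- The number of strict local minima (under single spin flips) of the energy function of a restricted Boltzmann machine with V visible and H hidden binary neurons is at most min(2^V, 2^H). -/
import Mathlib


open Finset

/-- Spin value of a boolean neuron. -/
noncomputable def spin (b : Bool) : ℝ := if b then 1 else -1

/-- Energy of a restricted Boltzmann machine on boolean (±1) configurations. -/
noncomputable def rbmEnergyB {V H : ℕ} (W : Fin V → Fin H → ℝ) (b : Fin V → ℝ)
    (c : Fin H → ℝ) (v : Fin V → Bool) (h : Fin H → Bool) : ℝ :=
  -(∑ j, ∑ α, spin (v j) * W j α * spin (h α)) - ∑ j, b j * spin (v j)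
    - ∑ α, c α * spin (h α)

/-- `(v,h)` is a strict local minimum: flipping any single (visible or hidden)
spin strictly increases the energy. -/
def IsStrictLocalMin {V H : ℕ} (W : Fin V → Fin H → ℝ) (b : Fin V → ℝ)
    (c : Fin H → ℝ) (p : (Fin V → Bool) × (Fin H → Bool)) : Prop :=
  (∀ j, rbmEnergyB W b c p.1 p.2 <
      rbmEnergyB W b c (Function.update p.1 j (!p.1 j)) p.2) ∧
  (∀ α, rbmEnergyB W b c p.1 p.2 <
      rbmEnergyB W b c p.1 (Function.update p.2 α (!p.2 α)))

lemma spin_not (x : Bool) : spin (!x) = -spin x := by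
  cases x <;> simp [spin]

lemma sum_spin_update {n : ℕ} (A : Fin n → ℝ) (h : Fin n → Bool) (α : Fin n) :
    ∑ β, A β * spin (Function.update h α (!h α) β)
      = (∑ β, A β * spin (h β)) - 2 * (A α * spin (h α)) := by
  have h1 := Finset.sum_eq_sum_sdiff_singleton_add (Finset.mem_univ α)
    (fun β => A β * spin (Function.update h α (!h α) β))
  have h2 := Finset.sum_eq_sum_sdiff_singleton_add (Finset.mem_univ α)
    (fun β => A β * spin (h β))
  rw [h1, h2, Function.update_self, spin_not]
  have hc : ∀ β ∈ Finset.univ \ {α},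
      A β * spin (Function.update h α (!h α) β) = A β * spin (h β) := by
    intro β hβ
    simp only [Finset.mem_sdiff, Finset.mem_singleton] at hβ
    rw [Function.update_of_ne hβ.2]
  rw [Finset.sum_congr rfl hc]
  ring

/-- Energy as a linear function of the hidden spins. -/
lemma rbm_as_hidden {V H : ℕ} (W : Fin V → Fin H → ℝ) (b : Fin V → ℝ)
    (c : Fin H → ℝ) (v : Fin V → Bool) (h : Fin H → Bool) :
    rbmEnergyB W b c v h
      = -(∑ α, (c α + ∑ j, spin (v j) * W j α) * spin (h α))
        - ∑ j, b j * spin (v j) := by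
  unfold rbmEnergyB
  rw [Finset.sum_comm]
  simp only [add_mul, Finset.sum_mul, Finset.sum_add_distrib]
  ring

/-- Energy as a linear function of the visible spins. -/
lemma rbm_as_visible {V H : ℕ} (W : Fin V → Fin H → ℝ) (b : Fin V → ℝ)
    (c : Fin H → ℝ) (v : Fin V → Bool) (h : Fin H → Bool) :
    rbmEnergyB W b c v h
      = -(∑ j, (b j + ∑ α, W j α * spin (h α)) * spin (v j))
        - ∑ α, c α * spin (h α) := by
  unfold rbmEnergyB
  have key : ∀ j, (∑ α, W j α * spin (h α)) * spin (v j)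
      = ∑ α, spin (v j) * W j α * spin (h α) := by
    intro j
    rw [Finset.sum_mul]
    exact Finset.sum_congr rfl fun α _ => by ring
  simp only [add_mul, Finset.sum_add_distrib, key]
  ring

lemma hidden_sign {V H : ℕ} {W : Fin V → Fin H → ℝ} {b : Fin V → ℝ}
    {c : Fin H → ℝ} {p : (Fin V → Bool) × (Fin H → Bool)}
    (hp : IsStrictLocalMin W b c p) (α : Fin H) :
    0 < (c α + ∑ j, spin (p.1 j) * W j α) * spin (p.2 α) := by
  have := hp.2 α
  rw [rbm_as_hidden, rbm_as_hidden,
    sum_spin_update (fun β => (c β + ∑ j, spin (p.1 j) * W j β)) p.2 α] at this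
  linarith

lemma visible_sign {V H : ℕ} {W : Fin V → Fin H → ℝ} {b : Fin V → ℝ}
    {c : Fin H → ℝ} {p : (Fin V → Bool) × (Fin H → Bool)}
    (hp : IsStrictLocalMin W b c p) (j : Fin V) :
    0 < (b j + ∑ α, W j α * spin (p.2 α)) * spin (p.1 j) := by
  have := hp.1 j
  rw [rbm_as_visible, rbm_as_visible,
    sum_spin_update (fun i => (b i + ∑ α, W i α * spin (p.2 α))) p.1 j] at this
  linarith

lemma bool_eq_of_sign {A : ℝ} {x y : Bool}
    (hx : 0 < A * spin x) (hy : 0 < A * spin y) : x = y := by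
  cases x <;> cases y <;> simp [spin] at hx hy ⊢ <;> linarith

theorem rbm_strict_local_minima_card_le
    (V H : ℕ) (W : Fin V → Fin H → ℝ) (b : Fin V → ℝ) (c : Fin H → ℝ) :
    Nat.card {p : (Fin V → Bool) × (Fin H → Bool) // IsStrictLocalMin W b c p}
      ≤ min (2 ^ V) (2 ^ H) := by
  refine le_min ?_ ?_
  · -- injection via visible part
    have hinj : Function.Injective
        (fun p : {p : (Fin V → Bool) × (Fin H → Bool) // IsStrictLocalMin W b c p}
          => p.val.1) := by
      rintro ⟨⟨v₁, h₁⟩, hp₁⟩ ⟨⟨v₂, h₂⟩, hp₂⟩ hv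
      simp only at hv
      subst hv
      have : h₁ = h₂ := by
        funext α
        exact bool_eq_of_sign (hidden_sign hp₁ α) (hidden_sign hp₂ α)
      simp [this]
    calc Nat.card {p : (Fin V → Bool) × (Fin H → Bool) // IsStrictLocalMin W b c p}
        ≤ Nat.card (Fin V → Bool) := Nat.card_le_card_of_injective _ hinj
      _ = 2 ^ V := by simp [Nat.card_eq_fintype_card]
  · have hinj : Function.Injective
        (fun p : {p : (Fin V → Bool) × (Fin H → Bool) // IsStrictLocalMin W b c p}
          => p.val.2) := by
      rintro ⟨⟨v₁, h₁⟩, hp₁⟩ ⟨⟨v₂, h₂⟩, hp₂⟩ hh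
      simp only at hh
      subst hh
      have : v₁ = v₂ := by
        funext j
        exact bool_eq_of_sign (visible_sign hp₁ j) (visible_sign hp₂ j)
      simp [this]
    calc Nat.card {p : (Fin V → Bool) × (Fin H → Bool) // IsStrictLocalMin W b c p}
        ≤ Nat.card (Fin H → Bool) := Nat.card_le_card_of_injective _ hinj
      _ = 2 ^ H := by simp [Nat.card_eq_fintype_card]
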